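/- Let m ≥ 2, k ≥ 1 be integers and λ ∈ ℂ. Then the k-th derivative of g(x) = e^{λ x^m/m} satisfies the Faà di Bruno expansion g^{(k)}(x)/g(x) = Σ_{n=0}^{k-1} λ^{k-n} x^{(m-1)k - nm} · (k!/(m^{k-n}(k-n)!)) · Σ_{k_1+⋯+k_{k-n}=k, 1≤k_ℓ≤m} ∏_{ℓ=1}^{k-n} m!/((m-k_ℓ)! k_ℓ!). -/

import Mathlib

open scoped Classical

open Polynomial Finset

private def ccc (m a : ℕ) : ℕ := if 1 ≤ a ∧ a ≤ m then Nat.choose m a else 0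

private def Phi (m j k : ℕ) : ℕ := ∑ t ∈ Finset.Nat.antidiagonalTuple j k, ∏ ℓ, ccc m (t ℓ)

private lemma sum_adT_succ {M : Type*} [AddCommMonoid M] (j k : ℕ) (f : (Fin (j+1) → ℕ) → M) :
    ∑ t ∈ Finset.Nat.antidiagonalTuple (j+1) k, f t
      = ∑ p ∈ Finset.HasAntidiagonal.antidiagonal k, ∑ s ∈ Finset.Nat.antidiagonalTuple j p.2,
          f (Fin.cons p.1 s) := by
  rw [← Finset.sum_sigma (Finset.HasAntidiagonal.antidiagonal k)
      (fun p => Finset.Nat.antidiagonalTuple j p.2) (fun q => f (Fin.cons q.1.1 q.2))]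
  refine Finset.sum_bij' (fun (t : Fin (j+1) → ℕ) _ =>
      (⟨(t 0, ∑ i, Fin.tail t i), Fin.tail t⟩ : Σ _p : ℕ × ℕ, Fin j → ℕ))
      (fun q _ => Fin.cons q.1.1 q.2) ?_ ?_ ?_ ?_ ?_
  · intro t ht
    rw [Finset.mem_sigma]
    rw [Finset.Nat.mem_antidiagonalTuple] at ht
    dsimp only
    constructor
    · rw [Finset.HasAntidiagonal.mem_antidiagonal]
      rw [← ht, Fin.sum_univ_succ]
      rfl
    · exact Finset.Nat.mem_antidiagonalTuple.mpr rfl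
  · rintro ⟨p, s⟩ hq
    rw [Finset.mem_sigma] at hq
    rw [Finset.Nat.mem_antidiagonalTuple, Fin.sum_cons,
      Finset.Nat.mem_antidiagonalTuple.mp hq.2]
    exact Finset.HasAntidiagonal.mem_antidiagonal.mp hq.1
  · intro t _
    exact Fin.cons_self_tail t
  · rintro ⟨p, s⟩ hq
    rw [Finset.mem_sigma] at hq
    have h2 : ∑ i, s i = p.2 := Finset.Nat.mem_antidiagonalTuple.mp hq.2
    simp [Fin.tail_cons, h2]
  · intro t _
    rw [Fin.cons_self_tail t]

private lemma phi_cast (m : ℕ) : ∀ j k : ℕ,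
    ((Phi m j k : ℂ)) = (((1 + X) ^ m - 1 : ℂ[X]) ^ j).coeff k := by
  intro j
  induction j with
  | zero =>
    intro k
    cases k with
    | zero => simp [Phi]
    | succ k => simp [Phi, Polynomial.coeff_one]
  | succ j ih =>
    intro k
    have hc : ∀ a : ℕ, ((1 + X) ^ m - 1 : ℂ[X]).coeff a = (ccc m a : ℂ) := by
      intro a
      rw [Polynomial.coeff_sub, coeff_one_add_X_pow]
      cases a with
      | zero => simp [ccc]
      | succ a =>
        simp only [Polynomial.coeff_one, ccc]
        by_cases h : a + 1 ≤ m
        · simp [h]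
        · rw [Nat.choose_eq_zero_of_lt (by omega)]
          simp [h]
    rw [pow_succ', Polynomial.coeff_mul, Phi]
    push_cast
    rw [sum_adT_succ j k (fun t => (∏ ℓ, (ccc m (t ℓ) : ℂ)))]
    refine Finset.sum_congr rfl fun p _ => ?_
    rw [hc, ← ih p.2, Phi]
    push_cast
    rw [Finset.mul_sum]
    refine Finset.sum_congr rfl fun s _ => ?_
    rw [Fin.prod_univ_succ]
    simp

private lemma phi_zero_lt (m j k : ℕ) (h : k < j) : Phi m j k = 0 := by
  refine Finset.sum_eq_zero fun t ht => ?_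
  by_cases hall : ∀ ℓ, 1 ≤ t ℓ
  · exfalso
    have h1 : (Finset.univ : Finset (Fin j)).card • 1 ≤ ∑ i, t i :=
      Finset.card_nsmul_le_sum _ _ _ fun i _ => hall i
    rw [Finset.Nat.mem_antidiagonalTuple.mp ht] at h1
    simp at h1
    omega
  · push_neg at hall
    obtain ⟨ℓ, hℓ⟩ := hall
    refine Finset.prod_eq_zero (Finset.mem_univ ℓ) ?_
    rw [ccc, if_neg (by omega)]

private lemma phi_zero_big (m j k : ℕ) (h : j * m < k) : Phi m j k = 0 := by
  refine Finset.sum_eq_zero fun t ht => ?_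
  by_cases hall : ∀ ℓ, t ℓ ≤ m
  · exfalso
    have h1 : ∑ i, t i ≤ (Finset.univ : Finset (Fin j)).card • m :=
      Finset.sum_le_card_nsmul _ _ _ fun i _ => hall i
    rw [Finset.Nat.mem_antidiagonalTuple.mp ht] at h1
    simp at h1
    omega
  · push_neg at hall
    obtain ⟨ℓ, hℓ⟩ := hall
    refine Finset.prod_eq_zero (Finset.mem_univ ℓ) ?_
    rw [ccc, if_neg (by omega)]

private lemma phi_rec (m j k : ℕ) (hm : 1 ≤ m) (hj : 1 ≤ j) :
    ((k : ℂ) + 1) * (Phi m j (k+1) : ℂ) + (k : ℂ) * (Phi m j k : ℂ)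
      = (j : ℂ) * m * (Phi m j k : ℂ) + (j : ℂ) * m * (Phi m (j-1) k : ℂ) := by
  set F : ℂ[X] := (1 + X) ^ m - 1 with hF
  have hdF : derivative F = C (m : ℂ) * (1 + X) ^ (m - 1) := by
    rw [hF, derivative_sub, derivative_one, derivative_pow, derivative_add,
      derivative_one, derivative_X]
    ring
  have hFF : F ^ (j - 1) * F = F ^ j := by
    rw [← pow_succ, Nat.sub_add_cancel hj]
  have h1X : (1 + X : ℂ[X]) ^ (m - 1) * (1 + X) = (1 + X) ^ m := by
    rw [← pow_succ, Nat.sub_add_cancel hm]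
  have hF1 : ((1 + X : ℂ[X])) ^ m = F + 1 := by rw [hF]; ring
  have hmain : (1 + X) * derivative (F ^ j)
      = C ((j : ℂ) * m) * (F ^ j + F ^ (j - 1)) := by
    rw [derivative_pow, hdF]
    calc (1 + X) * (C (j : ℂ) * F ^ (j - 1) * (C (m : ℂ) * (1 + X) ^ (m - 1)))
        = C ((j:ℂ) * m) * F ^ (j-1) * ((1 + X) ^ (m-1) * (1 + X)) := by
          rw [C_mul]; ring
      _ = C ((j:ℂ) * m) * F ^ (j-1) * (F + 1) := by rw [h1X, hF1]
      _ = C ((j:ℂ) * m) * (F ^ j + F ^ (j-1)) := by rw [mul_add, mul_add, mul_one, mul_assoc, hFF]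
  have hco := congrArg (fun p => Polynomial.coeff p k) hmain
  rw [add_mul, one_mul, Polynomial.coeff_add, Polynomial.coeff_derivative,
    Polynomial.coeff_C_mul, Polynomial.coeff_add] at hco
  have hXD : (X * derivative (F ^ j)).coeff k = (k : ℂ) * (F ^ j).coeff k := by
    cases k with
    | zero => simp [Polynomial.mul_coeff_zero]
    | succ k =>
      rw [Polynomial.coeff_X_mul, Polynomial.coeff_derivative]
      push_cast
      ring
  rw [hXD] at hco
  simp only [hF] at hco
  simp only [← phi_cast] at hco
  linear_combination hco


private lemma inner_eq_phi (m j k : ℕ) :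
    (∑ t ∈ (Finset.Nat.antidiagonalTuple j k).filter
        (fun t => ∀ ℓ, 1 ≤ t ℓ ∧ t ℓ ≤ m),
      ∏ ℓ, Nat.factorial m / (Nat.factorial (m - t ℓ) * Nat.factorial (t ℓ))) = Phi m j k := by
  rw [Phi, Finset.sum_filter]
  refine Finset.sum_congr rfl fun t _ => ?_
  by_cases h : ∀ ℓ, 1 ≤ t ℓ ∧ t ℓ ≤ m
  · rw [if_pos h]
    refine Finset.prod_congr rfl fun ℓ _ => ?_
    obtain ⟨h1, h2⟩ := h ℓ
    rw [ccc, if_pos ⟨h1, h2⟩, Nat.choose_eq_factorial_div_factorial h2, mul_comm]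
  · rw [if_neg h]
    push_neg at h
    obtain ⟨ℓ, hℓ⟩ := h
    refine (Finset.prod_eq_zero (Finset.mem_univ ℓ) ?_).symm
    rw [ccc, if_neg (by intro hc; have := hℓ hc.1; omega)]

private lemma phi_one_one (m : ℕ) (hm : 1 ≤ m) : Phi m 1 1 = m := by
  rw [Phi, Finset.Nat.antidiagonalTuple_one, Finset.sum_singleton]
  simp [ccc, hm, Nat.choose_one_right]

private lemma hasDerivAt_g (m : ℕ) (hm : 1 ≤ m) (lam : ℂ) (x : ℝ) :
    HasDerivAt (fun y : ℝ => Complex.exp (lam * (y:ℂ) ^ m / m))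
      (lam * (x:ℂ) ^ (m-1) * Complex.exp (lam * (x:ℂ) ^ m / m)) x := by
  have hm0 : (m:ℂ) ≠ 0 := Nat.cast_ne_zero.mpr (by omega)
  have h0 : HasDerivAt (fun y : ℝ => (y:ℂ)) 1 x := Complex.ofRealCLM.hasDerivAt
  have h1 : HasDerivAt (fun y : ℝ => (y:ℂ) ^ m) ((m:ℂ) * (x:ℂ) ^ (m-1)) x :=
    (hasDerivAt_pow m (x:ℂ)).comp_ofReal
  have h2 := HasDerivAt.const_mul (lam / (m:ℂ)) h1
  have h3 := h2.cexp
  have key : ∀ y : ℝ, lam * (y:ℂ) ^ m / m = lam / m * (y:ℂ) ^ m := fun y => by ring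
  simp_rw [key]
  have heq : lam * (x:ℂ) ^ (m-1) * Complex.exp (lam / m * (x:ℂ) ^ m)
      = Complex.exp (lam / m * (x:ℂ) ^ m) * (lam / m * ((m:ℂ) * (x:ℂ) ^ (m-1))) := by
    field_simp
  rw [heq]
  exact h3

private noncomputable def co (m : ℕ) (lam : ℂ) (k n : ℕ) : ℂ :=
  lam ^ (k - n) * ((Nat.factorial k : ℂ) / ((m:ℂ) ^ (k - n) * (Nat.factorial (k - n) : ℂ)))
    * (Phi m (k - n) k : ℂ)

private def ee (m k n : ℕ) : ℕ := (m - 1) * k - n * m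

private noncomputable def AA (m : ℕ) (lam : ℂ) (k n : ℕ) : ℂ :=
  lam ^ (k+1-n) * ((Nat.factorial k : ℂ) / ((m:ℂ) ^ (k+1-n) * (Nat.factorial (k+1-n) : ℂ)))
    * ((((k+1-n) * m : ℕ) : ℂ) - (k:ℂ)) * (Phi m (k+1-n) k : ℂ)

private lemma main_ind (m : ℕ) (hm : 2 ≤ m) (lam : ℂ) (k : ℕ) (hk : 1 ≤ k) :
    ∀ x : ℝ,
      iteratedDeriv k (fun y : ℝ => Complex.exp (lam * (y:ℂ) ^ m / m)) x
        = (∑ n ∈ Finset.range k, co m lam k n * (x:ℂ) ^ ee m k n)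
            * Complex.exp (lam * (x:ℂ) ^ m / m) := by
  have hm1 : 1 ≤ m := by omega
  have hm0 : (m:ℂ) ≠ 0 := Nat.cast_ne_zero.mpr (by omega)
  induction k, hk using Nat.le_induction with
  | base =>
    intro x
    rw [iteratedDeriv_one, (hasDerivAt_g m hm1 lam x).deriv, Finset.sum_range_one]
    have h1 : ee m 1 0 = m - 1 := by simp [ee]
    have h2 : co m lam 1 0 = lam := by
      rw [co, phi_one_one m hm1]
      simp [Nat.factorial]
      field_simp
    rw [h1, h2]
  | succ k hk ih =>
    intro x
    rw [iteratedDeriv_succ]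
    have hfun : iteratedDeriv k (fun y : ℝ => Complex.exp (lam * (y:ℂ) ^ m / m))
        = fun z : ℝ => (∑ n ∈ Finset.range k, co m lam k n * (z:ℂ) ^ ee m k n)
            * Complex.exp (lam * (z:ℂ) ^ m / m) := funext ih
    rw [hfun]
    have hpoly : HasDerivAt
        (fun y : ℝ => ∑ n ∈ Finset.range k, co m lam k n * (y:ℂ) ^ ee m k n)
        (∑ n ∈ Finset.range k, co m lam k n * ((ee m k n : ℂ) * (x:ℂ) ^ (ee m k n - 1))) x :=
      HasDerivAt.fun_sum fun n _ =>
        HasDerivAt.const_mul _ ((hasDerivAt_pow (ee m k n) (x:ℂ)).comp_ofReal)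
    have H : HasDerivAt (fun z : ℝ => (∑ n ∈ Finset.range k, co m lam k n * (z:ℂ) ^ ee m k n)
        * Complex.exp (lam * (z:ℂ) ^ m / m)) _ x := hpoly.mul (hasDerivAt_g m hm1 lam x)
    rw [H.deriv]
    -- now the algebraic identity
    have co_kk : co m lam k k = 0 := by
      rw [co, Nat.sub_self, phi_zero_big m 0 k (by rw [zero_mul]; omega)]
      simp
    have claim1 : ∀ n, n ≤ k → co m lam (k+1) n
        = AA m lam k n + lam * co m lam k n := by
      intro n hn
      obtain ⟨i, hi⟩ : ∃ i, k + 1 - n = i + 1 := ⟨k - n, by omega⟩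
      have hkn : k - n = i := by omega
      have hrec := phi_rec m (i+1) k hm1 (by omega)
      rw [co, co, AA, hi, hkn]
      have hk1 : ((k:ℂ) + 1) ≠ 0 := Nat.cast_add_one_ne_zero k
      have hfacki : ((Nat.factorial i : ℂ)) ≠ 0 := Nat.cast_ne_zero.mpr (Nat.factorial_ne_zero i)
      have hmp : ((m:ℂ) ^ i) ≠ 0 := pow_ne_zero _ hm0
      have hfs : (Nat.factorial (k+1) : ℂ) = ((k:ℂ)+1) * (Nat.factorial k : ℂ) := by
        rw [Nat.factorial_succ]; push_cast; ring
      have hfsi : (Nat.factorial (i+1) : ℂ) = ((i:ℂ)+1) * (Nat.factorial i : ℂ) := by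
        rw [Nat.factorial_succ]; push_cast; ring
      have hii : ((i:ℂ) + 1) ≠ 0 := Nat.cast_add_one_ne_zero i
      rw [hfs, hfsi]
      push_cast at hrec ⊢
      field_simp
      linear_combination (lam ^ (i+1) * (Nat.factorial k : ℂ) * (m:ℂ) ^ i) * hrec
    have hphi0 : ∀ n, n < k → ¬ (n * m ≤ (m - 1) * k) → Phi m (k - n) k = 0 := by
      intro n hn hcase
      apply phi_zero_big
      have e2 : (k - n) * m + n * m = m * k := by
        rw [← Nat.add_mul, Nat.sub_add_cancel hn.le, Nat.mul_comm]
      have e3 : (m - 1) * k + k = m * k := by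
        rw [Nat.sub_one_mul]
        have hkm : k ≤ m * k := Nat.le_mul_of_pos_left k (by omega)
        omega
      generalize h1 : (k - n) * m = a at e2 ⊢
      generalize h2 : n * m = b at e2 hcase
      generalize h3 : (m - 1) * k = cc at e3 hcase
      generalize h4 : m * k = d at e2 e3
      omega
    have hBterm : ∀ n, n < k →
        lam * co m lam k n * (x:ℂ) ^ ee m (k+1) n
          = co m lam k n * (x:ℂ) ^ ee m k n * (lam * (x:ℂ) ^ (m-1)) := by
      intro n hn
      by_cases hcase : n * m ≤ (m - 1) * k
      · have hexp : ee m (k+1) n = ee m k n + (m-1) := by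
          simp only [ee]
          have e1 : (m - 1) * (k + 1) = (m - 1) * k + (m - 1) := by ring
          rw [e1]
          generalize (m - 1) * k = a at hcase ⊢
          generalize n * m = b at hcase ⊢
          omega
        rw [hexp, pow_add]
        ring
      · rw [co, hphi0 n hn hcase]
        simp
    have hAterm : ∀ n, n < k →
        AA m lam k (n+1) * (x:ℂ) ^ ee m (k+1) (n+1)
          = co m lam k n * ((ee m k n : ℂ) * (x:ℂ) ^ (ee m k n - 1)) := by
      intro n hn
      have hsub : k + 1 - (n + 1) = k - n := by omega
      by_cases hcase : n * m ≤ (m - 1) * k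
      · have e3 : (m - 1) * k + k = m * k := by
          rw [Nat.sub_one_mul]
          have hkm : k ≤ m * k := Nat.le_mul_of_pos_left k (by omega)
          omega
        have hnat : (k - n) * m = ee m k n + k := by
          simp only [ee]
          have e2 : (k - n) * m + n * m = m * k := by
            rw [← Nat.add_mul, Nat.sub_add_cancel hn.le, Nat.mul_comm]
          generalize h1 : (k - n) * m = a at e2 ⊢
          generalize h2 : n * m = b at e2 hcase ⊢
          generalize h3 : (m - 1) * k = cc at e3 hcase ⊢
          generalize h4 : m * k = d at e2 e3
          omega
        have hexp : ee m (k+1) (n+1) = ee m k n - 1 := by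
          simp only [ee]
          have e1 : (m - 1) * (k + 1) = (m - 1) * k + (m - 1) := by ring
          have e2 : (n + 1) * m = n * m + m := by ring
          rw [e1, e2]
          generalize (m - 1) * k = a at hcase ⊢
          generalize n * m = b at hcase ⊢
          omega
        rw [hexp, AA, hsub, hnat, co]
        push_cast
        ring
      · rw [AA, hsub, hphi0 n hn hcase, co, hphi0 n hn hcase]
        simp
    have key : (∑ n ∈ Finset.range (k+1), co m lam (k+1) n * (x:ℂ) ^ ee m (k+1) n)
        = (∑ n ∈ Finset.range k, co m lam k n * ((ee m k n : ℂ) * (x:ℂ) ^ (ee m k n - 1)))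
          + (∑ n ∈ Finset.range k, co m lam k n * (x:ℂ) ^ ee m k n)
              * (lam * (x:ℂ) ^ (m - 1)) := by
      have step1 : ∑ n ∈ Finset.range (k+1), co m lam (k+1) n * (x:ℂ) ^ ee m (k+1) n
          = ∑ n ∈ Finset.range (k+1), (AA m lam k n * (x:ℂ) ^ ee m (k+1) n
              + lam * co m lam k n * (x:ℂ) ^ ee m (k+1) n) := by
        refine Finset.sum_congr rfl fun n hn => ?_
        rw [claim1 n (Nat.lt_succ_iff.mp (Finset.mem_range.mp hn))]
        ring
      rw [step1, Finset.sum_add_distrib]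
      congr 1
      · rw [Finset.sum_range_succ']
        have hA0 : AA m lam k 0 * (x:ℂ) ^ ee m (k+1) 0 = 0 := by
          rw [AA, phi_zero_lt m (k+1-0) k (by omega)]
          simp
        rw [hA0, add_zero]
        exact Finset.sum_congr rfl fun n hn => hAterm n (Finset.mem_range.mp hn)
      · rw [Finset.sum_range_succ, co_kk]
        simp only [mul_zero, zero_mul, add_zero]
        rw [Finset.sum_mul]
        exact Finset.sum_congr rfl fun n hn => hBterm n (Finset.mem_range.mp hn)
    rw [key]
    ring

theorem faa_di_bruno_expansion (m k : ℕ) (hm : 2 ≤ m) (hk : 1 ≤ k) (lam : ℂ) :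
    ∀ x : ℝ,
      iteratedDeriv k (fun y : ℝ => Complex.exp (lam * (y : ℂ) ^ m / m)) x
        = (∑ n ∈ Finset.range k,
            lam ^ (k - n) * (x : ℂ) ^ ((m - 1) * k - n * m)
              * ((Nat.factorial k : ℂ) / ((m : ℂ) ^ (k - n) * (Nat.factorial (k - n) : ℂ)))
              * ((∑ t ∈ (Finset.Nat.antidiagonalTuple (k - n) k).filter
                    (fun t => ∀ ℓ, 1 ≤ t ℓ ∧ t ℓ ≤ m),
                  ∏ ℓ, Nat.factorial m / (Nat.factorial (m - t ℓ) * Nat.factorial (t ℓ)) : ℕ) : ℂ))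
          * Complex.exp (lam * (x : ℂ) ^ m / m) := by
  intro x
  rw [main_ind m hm lam k hk x]
  congr 1
  refine Finset.sum_congr rfl fun n hn => ?_
  rw [inner_eq_phi m (k - n) k]
  simp only [co, ee]
  ring
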